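/- Let Γ be a Brauer configuration, V a polygon satisfying condition (E), and for each polygon U let χ(U) denote the number of e ∈ H₂(V) ⊔ H₃(V) with [p_V(e)] = U. Then for every vertex v with s^{-1}(v) ⊄ V, one has Σ_{U ∈ H/ψ} χ(U) · occ(v,U) = occ(v,V) + occ'(v,V), where occ'(v,V) := #{e ∈ H₂(V) ⊔ H₃(V) : s(\overline{p_V(e)}) = v}. -/

import Mathlib

open Finset

noncomputable section
open scoped Classical

variable {H : Type*} [Fintype H]

/-- The setoid on angles whose classes are the `σ`-orbits (the *vertices*). -/
def orbitSetoid (σ : Equiv.Perm H) : Setoid H :=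
  ⟨σ.SameCycle, ⟨fun x => Equiv.Perm.SameCycle.refl σ x,
    fun h => h.symm, fun h1 h2 => h1.trans h2⟩⟩

/-- Vertices of a Brauer configuration: `σ`-orbits of angles. -/
abbrev Vertex (σ : Equiv.Perm H) := Quotient (orbitSetoid σ)

/-- Polygons of a Brauer configuration: `ψ`-equivalence classes of angles. -/
abbrev BrauerPolygon (ψ : Setoid H) := Quotient ψ

/-- The canonical surjection `s : H → H/⟨σ⟩`. -/
def vtx (σ : Equiv.Perm H) (h : H) : Vertex σ := Quotient.mk _ h

/-- The canonical surjection `H → H/ψ`. -/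
def pgn (ψ : Setoid H) (h : H) : BrauerPolygon ψ := Quotient.mk _ h

/-- Valency of a vertex: the cardinality of `s⁻¹(u)`. -/
def valency (σ : Equiv.Perm H) (u : Vertex σ) : ℕ :=
  (univ.filter fun h => vtx σ h = u).card

/-- `occ(u, V)` : the number of angles of the polygon `V` lying on the vertex `u`. -/
def occ (σ : Equiv.Perm H) (ψ : Setoid H) (u : Vertex σ) (V : BrauerPolygon ψ) : ℕ :=
  (univ.filter fun h => vtx σ h = u ∧ pgn ψ h = V).card

/-- Number of angles of a polygon (`#V`). -/
def polyCard (ψ : Setoid H) (V : BrauerPolygon ψ) : ℕ :=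
  (univ.filter fun h => pgn ψ h = V).card

/-- The data `(H, σ, ψ, s, 𝔪)` is a Brauer configuration: `H` is nonempty,
every `ψ`-class has at least two elements, and the multiplicity is positive. -/
def IsBrauerConfig (σ : Equiv.Perm H) (ψ : Setoid H) (m : Vertex σ → ℕ) : Prop :=
  Nonempty H ∧ (∀ h : H, ∃ h', h' ≠ h ∧ ψ.r h h') ∧ (∀ v, 0 < m v)

/-- The angle `h` belongs to the polygon `V`. -/
def inPoly (ψ : Setoid H) (V : BrauerPolygon ψ) (h : H) : Prop := pgn ψ h = V

/-- `H₁(V) = {e ∈ V : s⁻¹(s(e)) ⊆ V}`. -/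
def H1 (σ : Equiv.Perm H) (ψ : Setoid H) (V : BrauerPolygon ψ) : Set H :=
  {e | inPoly ψ V e ∧ ∀ h, σ.SameCycle e h → inPoly ψ V h}

/-- `H₂(V) = {e ∈ V : s⁻¹(s(e)) ⊄ V, σ(e) ∈ V}`. -/
def H2 (σ : Equiv.Perm H) (ψ : Setoid H) (V : BrauerPolygon ψ) : Set H :=
  {e | inPoly ψ V e ∧ ¬ (∀ h, σ.SameCycle e h → inPoly ψ V h) ∧ inPoly ψ V (σ e)}

/-- `H₃(V) = {e ∈ V : s⁻¹(s(e)) ⊄ V, σ(e) ∉ V}`. -/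
def H3 (σ : Equiv.Perm H) (ψ : Setoid H) (V : BrauerPolygon ψ) : Set H :=
  {e | inPoly ψ V e ∧ ¬ (∀ h, σ.SameCycle e h → inPoly ψ V h) ∧ ¬ inPoly ψ V (σ e)}

/-- `c = min {i ≥ 1 : σ^{-i}(f) ∉ V}`. -/
def pSteps (σ : Equiv.Perm H) (ψ : Setoid H) (V : BrauerPolygon ψ) (f : H) : ℕ :=
  sInf {i : ℕ | 1 ≤ i ∧ ¬ inPoly ψ V ((σ.symm ^ i) f)}

/-- `p_V(f) = σ^{-c}(f)`. -/
def pV (σ : Equiv.Perm H) (ψ : Setoid H) (V : BrauerPolygon ψ) (f : H) : H :=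
  (σ.symm ^ pSteps σ ψ V f) f

/-- `d = min {j ≥ 1 : σ^{j}(f) ∉ V}`. -/
def nSteps (σ : Equiv.Perm H) (ψ : Setoid H) (V : BrauerPolygon ψ) (f : H) : ℕ :=
  sInf {j : ℕ | 1 ≤ j ∧ ¬ inPoly ψ V ((σ ^ j) f)}

/-- `n_V(f) = σ^{d}(f)`. -/
def nV (σ : Equiv.Perm H) (ψ : Setoid H) (V : BrauerPolygon ψ) (f : H) : H :=
  (σ ^ nSteps σ ψ V f) f

/-- The polygon of `h` is a `2`-gon (an *edge*). -/
def isEdge (ψ : Setoid H) (h : H) : Prop :=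
  (univ.filter fun x => ψ.r h x).card = 2

/-- For an angle of an edge `{h, h'}`, `bar h = h'`; junk value otherwise. -/
def bar (ψ : Setoid H) (h : H) : H :=
  if hx : ∃ x, x ≠ h ∧ ψ.r h x ∧ ∀ y, y ≠ h → ψ.r h y → y = x then hx.choose else h

/-- Condition (E): every predecessor of `V` around each vertex is an edge or `V` itself. -/
def condE (σ : Equiv.Perm H) (ψ : Setoid H) (V : BrauerPolygon ψ) : Prop :=
  ∀ e : H, inPoly ψ V e → isEdge ψ (σ.symm e) ∨ pgn ψ (σ.symm e) = V

/-- `H₄(V) = {f ∈ H∖V : ∃ e ∈ V, σ⁻¹(e) ∉ V, n_V(f) = bar(σ⁻¹(e))}`. -/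
def H4 (σ : Equiv.Perm H) (ψ : Setoid H) (V : BrauerPolygon ψ) : Set H :=
  {f | ¬ inPoly ψ V f ∧ ∃ e, inPoly ψ V e ∧ ¬ inPoly ψ V (σ.symm e) ∧
    nV σ ψ V f = bar ψ (σ.symm e)}

/-- `H₅(V) = {f ∈ H∖V : ∀ e ∈ V with σ⁻¹(e) ∉ V, n_V(f) ≠ bar(σ⁻¹(e))}`. -/
def H5 (σ : Equiv.Perm H) (ψ : Setoid H) (V : BrauerPolygon ψ) : Set H :=
  {f | ¬ inPoly ψ V f ∧ ∀ e, inPoly ψ V e → ¬ inPoly ψ V (σ.symm e) →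
    nV σ ψ V f ≠ bar ψ (σ.symm e)}

/-- For `f ∈ H₄(V)`, the unique `e ∈ V` with `n_V(f) = bar(σ⁻¹(e))`; junk otherwise. -/
def xF (σ : Equiv.Perm H) (ψ : Setoid H) (V : BrauerPolygon ψ) (f : H) : H :=
  if hx : ∃ e, inPoly ψ V e ∧ ¬ inPoly ψ V (σ.symm e) ∧ nV σ ψ V f = bar ψ (σ.symm e)
  then hx.choose else f

/-- The underlying map `σ'` of the left flip at `V` (Table 1). -/
def flipFun (σ : Equiv.Perm H) (ψ : Setoid H) (V : BrauerPolygon ψ) (h : H) : H :=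
  if h ∈ H1 σ ψ V ∨ h ∈ H2 σ ψ V then σ h
  else if h ∈ H3 σ ψ V then bar ψ (pV σ ψ V h)
  else if h ∈ H4 σ ψ V then xF σ ψ V h
  else nV σ ψ V h

/-- The orbit setoid of the flipped map `σ'` (vertices of the flipped configuration). -/
def flipOrbitSetoid (σ : Equiv.Perm H) (ψ : Setoid H) (V : BrauerPolygon ψ) : Setoid H :=
  Relation.EqvGen.setoid (fun a b => flipFun σ ψ V a = b)

/-- The canonical surjection `s'` of the flipped configuration. -/
def vtx' (σ : Equiv.Perm H) (ψ : Setoid H) (V : BrauerPolygon ψ) (h : H) :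
    Quotient (flipOrbitSetoid σ ψ V) := Quotient.mk _ h

/-- The vertex of `Γ` corresponding (via the table defining the flip) to the
`σ'`-orbit of an angle `h`. -/
def gammaFun (σ : Equiv.Perm H) (ψ : Setoid H) (V : BrauerPolygon ψ) (h : H) : Vertex σ :=
  if h ∈ H2 σ ψ V ∨ h ∈ H3 σ ψ V then vtx σ (bar ψ (pV σ ψ V h)) else vtx σ h

/-- `occ'(v, V) = #{e ∈ H₂(V) ⊔ H₃(V) : s(bar(p_V(e))) = v}`. -/
def occ' (σ : Equiv.Perm H) (ψ : Setoid H) (V : BrauerPolygon ψ) (v : Vertex σ) : ℕ :=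
  (univ.filter fun e => (e ∈ H2 σ ψ V ∨ e ∈ H3 σ ψ V) ∧
    vtx σ (bar ψ (pV σ ψ V e)) = v).card

/-- `χ(U)` : the multiplicity of `P_U` in `T_V⁰`, i.e. the number of
`e ∈ H₂(V) ⊔ H₃(V)` with `[p_V(e)] = U`. -/
def chi (σ : Equiv.Perm H) (ψ : Setoid H) (V U : BrauerPolygon ψ) : ℕ :=
  (univ.filter fun e => (e ∈ H2 σ ψ V ∨ e ∈ H3 σ ψ V) ∧
    pgn ψ (pV σ ψ V e) = U).card

section ChiAux

variable (σ : Equiv.Perm H) (ψ : Setoid H) (V : BrauerPolygon ψ)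

lemma pgn_eq_iff (h h' : H) : pgn ψ h = pgn ψ h' ↔ ψ.r h h' :=
  ⟨fun e => Quotient.exact e, fun e => Quotient.sound e⟩

lemma vtx_eq_iff (h h' : H) : vtx σ h = vtx σ h' ↔ σ.SameCycle h h' :=
  ⟨fun e => Quotient.exact e, fun e => Quotient.sound e⟩

lemma sameCycle_pV (e : H) : σ.SameCycle e (pV σ ψ V e) := by
  refine ⟨-(pSteps σ ψ V e : ℤ), ?_⟩
  have : σ ^ (-(pSteps σ ψ V e : ℤ)) = σ.symm ^ (pSteps σ ψ V e) := by
    rw [zpow_neg, zpow_natCast, ← inv_pow]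
    rfl
  rw [this]; rfl

lemma pSteps_mem {e : H}
    (hne : ∃ h, σ.SameCycle e h ∧ ¬ inPoly ψ V h) :
    1 ≤ pSteps σ ψ V e ∧ ¬ inPoly ψ V ((σ.symm ^ pSteps σ ψ V e) e) := by
  have hmem : pSteps σ ψ V e ∈ {i : ℕ | 1 ≤ i ∧ ¬ inPoly ψ V ((σ.symm ^ i) e)} := by
    apply Nat.sInf_mem
    obtain ⟨h, hc, hh⟩ := hne
    obtain ⟨i, hi0, _, hie⟩ :=
      (Equiv.Perm.sameCycle_inv.mpr hc).exists_pow_eq''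
    refine ⟨i, hi0, ?_⟩
    have hie' : (σ.symm ^ i) e = h := hie
    rw [hie']; exact hh
  exact hmem

lemma pV_not_in {e : H}
    (hne : ∃ h, σ.SameCycle e h ∧ ¬ inPoly ψ V h) :
    ¬ inPoly ψ V (pV σ ψ V e) :=
  (pSteps_mem σ ψ V hne).2

lemma sigma_pV_in {e : H} (he : inPoly ψ V e)
    (hne : ∃ h, σ.SameCycle e h ∧ ¬ inPoly ψ V h) :
    inPoly ψ V (σ (pV σ ψ V e)) := by
  have h1 : 1 ≤ pSteps σ ψ V e := (pSteps_mem σ ψ V hne).1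
  rcases eq_or_lt_of_le h1 with h2 | h2
  · have : pV σ ψ V e = σ.symm e := by rw [pV, ← h2, pow_one]
    rw [this, Equiv.apply_symm_apply]; exact he
  · set c := pSteps σ ψ V e with hc
    have hkey : σ (pV σ ψ V e) = (σ.symm ^ (c - 1)) e := by
      have hcc : c = (c - 1) + 1 := by omega
      rw [pV, ← hc, hcc, pow_succ']
      simp [Equiv.Perm.mul_apply]
    rw [hkey]
    by_contra hcon
    have : c - 1 ∈ {i : ℕ | 1 ≤ i ∧ ¬ inPoly ψ V ((σ.symm ^ i) e)} :=
      ⟨by omega, hcon⟩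
    have h4 : c ≤ c - 1 := Nat.sInf_le this
    omega

lemma cond_elim {e : H} (hce : e ∈ H2 σ ψ V ∨ e ∈ H3 σ ψ V) :
    inPoly ψ V e ∧ ∃ h, σ.SameCycle e h ∧ ¬ inPoly ψ V h := by
  rcases hce with ⟨he, hna, _⟩ | ⟨he, hna, _⟩ <;>
  · push_neg at hna
    obtain ⟨h, h1, h2⟩ := hna
    exact ⟨he, h, h1, h2⟩

lemma mem_H23 {e : H} (he : inPoly ψ V e)
    (hne : ∃ h, σ.SameCycle e h ∧ ¬ inPoly ψ V h) :
    e ∈ H2 σ ψ V ∨ e ∈ H3 σ ψ V := by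
  have hna : ¬ ∀ h, σ.SameCycle e h → inPoly ψ V h := by
    obtain ⟨h, hc, hh⟩ := hne
    exact fun hall => hh (hall h hc)
  by_cases hs : inPoly ψ V (σ e)
  · exact Or.inl ⟨he, hna, hs⟩
  · exact Or.inr ⟨he, hna, hs⟩

lemma isEdge_pV (hE : condE σ ψ V) {e : H}
    (hce : e ∈ H2 σ ψ V ∨ e ∈ H3 σ ψ V) :
    isEdge ψ (pV σ ψ V e) := by
  obtain ⟨he, hne⟩ := cond_elim σ ψ V hce
  have h1 : inPoly ψ V (σ (pV σ ψ V e)) := sigma_pV_in σ ψ V he hne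
  have h2 : ¬ inPoly ψ V (pV σ ψ V e) := pV_not_in σ ψ V hne
  rcases hE _ h1 with h3 | h3
  · rwa [Equiv.symm_apply_apply] at h3
  · rw [Equiv.symm_apply_apply] at h3
    exact absurd h3 h2

lemma bar_spec {h : H} (hedge : isEdge ψ h) :
    bar ψ h ≠ h ∧ ψ.r h (bar ψ h) ∧ ∀ y, ψ.r h y → y = h ∨ y = bar ψ h := by
  have hx : ∃ x, x ≠ h ∧ ψ.r h x ∧ ∀ y, y ≠ h → ψ.r h y → y = x := by
    obtain ⟨a, b, hab, hs⟩ := Finset.card_eq_two.mp hedge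
    have mem_iff : ∀ y, ψ.r h y ↔ (y = a ∨ y = b) := by
      intro y
      constructor
      · intro hy
        have : y ∈ ({a, b} : Finset H) := by
          rw [← hs]; exact mem_filter.mpr ⟨mem_univ _, hy⟩
        simpa using this
      · intro hy
        have : y ∈ univ.filter (fun x => ψ.r h x) := by
          rw [hs]; simpa using hy
        exact (mem_filter.mp this).2
    have hhm : h = a ∨ h = b := (mem_iff h).mp (ψ.refl h)
    rcases hhm with rfl | rfl
    · refine ⟨b, fun hb => hab hb.symm, (mem_iff b).mpr (Or.inr rfl), ?_⟩
      intro y hy hry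
      rcases (mem_iff y).mp hry with rfl | rfl
      · exact absurd rfl hy
      · rfl
    · refine ⟨a, fun ha => hab ha, (mem_iff a).mpr (Or.inl rfl), ?_⟩
      intro y hy hry
      rcases (mem_iff y).mp hry with rfl | rfl
      · rfl
      · exact absurd rfl hy
  have hb : bar ψ h = hx.choose := dif_pos hx
  obtain ⟨h1, h2, h3⟩ := hx.choose_spec
  rw [hb]
  refine ⟨h1, h2, fun y hy => ?_⟩
  by_cases hyh : y = h
  · exact Or.inl hyh
  · exact Or.inr (h3 y hyh hy)

end ChiAux

-- STATEMENT 10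
theorem chi_occ_sum
    (σ : Equiv.Perm H) (ψ : Setoid H) (m : Vertex σ → ℕ)
    (hΓ : IsBrauerConfig σ ψ m) (V : BrauerPolygon ψ) (hE : condE σ ψ V)
    (v : Vertex σ) (hv : ∃ h : H, vtx σ h = v ∧ ¬ inPoly ψ V h) :
    ∑ U : BrauerPolygon ψ, chi σ ψ V U * occ σ ψ v U =
      occ σ ψ v V + occ' σ ψ V v := by
  classical
  obtain ⟨h0, hh0v, hh0n⟩ := hv
  -- Step 1: collapse the sum over polygons to a sum over H₂ ⊔ H₃.
  have step1 : ∑ U : BrauerPolygon ψ, chi σ ψ V U * occ σ ψ v U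
      = ∑ e ∈ univ.filter (fun e => e ∈ H2 σ ψ V ∨ e ∈ H3 σ ψ V),
          occ σ ψ v (pgn ψ (pV σ ψ V e)) := by
    rw [← Finset.sum_fiberwise' (univ.filter (fun e => e ∈ H2 σ ψ V ∨ e ∈ H3 σ ψ V))
      (fun e => pgn ψ (pV σ ψ V e)) (occ σ ψ v)]
    refine Finset.sum_congr rfl fun U _ => ?_
    have hfe : (univ.filter (fun e => e ∈ H2 σ ψ V ∨ e ∈ H3 σ ψ V)).filter
        (fun e => pgn ψ (pV σ ψ V e) = U)
        = univ.filter (fun e => (e ∈ H2 σ ψ V ∨ e ∈ H3 σ ψ V) ∧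
            pgn ψ (pV σ ψ V e) = U) := by
      ext x; simp [Finset.mem_filter, and_assoc]
    rw [hfe, chi, Finset.sum_const, smul_eq_mul]
  rw [step1]
  -- Step 2: each summand splits into two indicator contributions.
  have step2 : ∀ e ∈ univ.filter (fun e => e ∈ H2 σ ψ V ∨ e ∈ H3 σ ψ V),
      occ σ ψ v (pgn ψ (pV σ ψ V e))
        = (if vtx σ (pV σ ψ V e) = v then 1 else 0)
          + (if vtx σ (bar ψ (pV σ ψ V e)) = v then 1 else 0) := by
    intro e he
    have hce : e ∈ H2 σ ψ V ∨ e ∈ H3 σ ψ V := (Finset.mem_filter.mp he).2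
    have hedge := isEdge_pV σ ψ V hE hce
    obtain ⟨hbne, hbr, hbmem⟩ := bar_spec ψ hedge
    set p := pV σ ψ V e with hp
    have hset : univ.filter (fun h => vtx σ h = v ∧ pgn ψ h = pgn ψ p)
        = ({p, bar ψ p} : Finset H).filter (fun h => vtx σ h = v) := by
      ext x
      simp only [Finset.mem_filter, Finset.mem_univ, true_and, Finset.mem_insert,
        Finset.mem_singleton]
      constructor
      · rintro ⟨hx1, hx2⟩
        have hrx : ψ.r p x := (pgn_eq_iff ψ p x).mp hx2.symm
        rcases hbmem x hrx with h | h
        · exact ⟨Or.inl h, hx1⟩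
        · exact ⟨Or.inr h, hx1⟩
      · rintro ⟨hx1, hx2⟩
        refine ⟨hx2, ?_⟩
        rcases hx1 with rfl | rfl
        · rfl
        · exact (pgn_eq_iff ψ _ _).mpr (ψ.symm hbr)
    rw [occ, hset]
    have hbp : bar ψ p ≠ p := hbne
    by_cases h1 : vtx σ p = v <;> by_cases h2 : vtx σ (bar ψ p) = v <;>
      simp [Finset.filter_insert, Finset.filter_singleton, h1, h2,
        Finset.card_insert_of_notMem, hbp, Ne.symm hbp]
  rw [Finset.sum_congr rfl step2, Finset.sum_add_distrib]
  -- Step 3: identify the two pieces.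
  have hfirst : ∑ e ∈ univ.filter (fun e => e ∈ H2 σ ψ V ∨ e ∈ H3 σ ψ V),
      (if vtx σ (pV σ ψ V e) = v then 1 else 0) = occ σ ψ v V := by
    rw [← Finset.card_filter]
    congr 1
    ext e
    simp only [Finset.mem_filter, Finset.mem_univ, true_and]
    constructor
    · rintro ⟨hce, hvv⟩
      obtain ⟨he, hne⟩ := cond_elim σ ψ V hce
      have hcyc := sameCycle_pV σ ψ V e
      exact ⟨((vtx_eq_iff σ e _).mpr hcyc).trans hvv, he⟩
    · rintro ⟨hvv, he⟩
      have hne : ∃ h, σ.SameCycle e h ∧ ¬ inPoly ψ V h := by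
        refine ⟨h0, ?_, hh0n⟩
        exact (vtx_eq_iff σ e h0).mp (hvv.trans hh0v.symm)
      refine ⟨mem_H23 σ ψ V he hne, ?_⟩
      rw [← (vtx_eq_iff σ e _).mpr (sameCycle_pV σ ψ V e)]
      exact hvv
  have hsecond : ∑ e ∈ univ.filter (fun e => e ∈ H2 σ ψ V ∨ e ∈ H3 σ ψ V),
      (if vtx σ (bar ψ (pV σ ψ V e)) = v then 1 else 0) = occ' σ ψ V v := by
    rw [← Finset.card_filter, occ']
    congr 1
    ext e
    simp [Finset.mem_filter, and_assoc]
  rw [hfirst, hsecond]
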